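/- Let C : ℕ → ℝ satisfy C_n ≥ 0 for all n ≥ 1, let 0 < s < t and 0 < b < a be reals, and suppose the series R(x) = Σ_{n=1}^∞ C_n x^{n−1} converges absolutely at x = s/a, s/b, t/a, and t/b. Then (b + t·R(t/b))·(a + s·R(s/a)) ≥ (b + s·R(s/b))·(a + t·R(t/a)). -/

import Mathlib

open Finset Filter

private lemma pow_aux {x y : ℝ} (hy : 0 ≤ y) (hxy : y ≤ x) {m n : ℕ} (h : m ≤ n) :
    y ^ n * x ^ m ≤ x ^ n * y ^ m := by
  obtain ⟨k, rfl⟩ := Nat.exists_eq_add_of_le h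
  have h1 : y ^ k ≤ x ^ k := pow_le_pow_left₀ hy hxy k
  have h0 : (0:ℝ) ≤ (x * y) ^ m := pow_nonneg (mul_nonneg (hy.trans hxy) hy) m
  calc y ^ (m + k) * x ^ m = (x * y) ^ m * y ^ k := by ring
    _ ≤ (x * y) ^ m * x ^ k := mul_le_mul_of_nonneg_left h1 h0
    _ = x ^ (m + k) * y ^ m := by ring

private lemma key_aux {x y u v : ℝ} (hy : 0 ≤ y) (hxy : y ≤ x) (hv : 0 ≤ v) (huv : v ≤ u)
    (n m : ℕ) : 0 ≤ (x ^ n * y ^ m - y ^ n * x ^ m) * (u ^ n * v ^ m - v ^ n * u ^ m) := by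
  rcases le_total m n with h | h
  · exact mul_nonneg (sub_nonneg.2 (pow_aux hy hxy h)) (sub_nonneg.2 (pow_aux hv huv h))
  · have h1 := pow_aux hy hxy h
    have h2 := pow_aux hv huv h
    nlinarith [h1, h2]

private lemma finite_ineq (d : ℕ → ℝ) (hd : ∀ n, 0 ≤ d n) {s t a b : ℝ}
    (hs : 0 < s) (hst : s ≤ t) (hb : 0 < b) (hba : b ≤ a) (N : ℕ) :
    (b + s * ∑ n ∈ Finset.range N, d n * (s / b) ^ n) *
        (a + t * ∑ n ∈ Finset.range N, d n * (t / a) ^ n) ≤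
      (b + t * ∑ n ∈ Finset.range N, d n * (t / b) ^ n) *
        (a + s * ∑ n ∈ Finset.range N, d n * (s / a) ^ n) := by
  have ha : 0 < a := hb.trans_le hba
  have ht : 0 < t := hs.trans_le hst
  set F := Finset.range N with hF
  set X1 := ∑ n ∈ F, d n * (t / b) ^ n with hX1
  set X2 := ∑ n ∈ F, d n * (s / b) ^ n with hX2
  set X3 := ∑ n ∈ F, d n * (s / a) ^ n with hX3
  set X4 := ∑ n ∈ F, d n * (t / a) ^ n with hX4
  set A := ∑ n ∈ F, d n *
      (a * t * (t / b) ^ n - a * s * (s / b) ^ n + b * s * (s / a) ^ n - b * t * (t / a) ^ n)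
    with hA_def
  set Qs := ∑ n ∈ F, ∑ m ∈ F,
      ((d n * (t / b) ^ n) * (d m * (s / a) ^ m) - (d n * (s / b) ^ n) * (d m * (t / a) ^ m))
    with hQ_def
  have hA : 0 ≤ A := by
    apply Finset.sum_nonneg
    intro n _
    have hterm : a * t * (t / b) ^ n - a * s * (s / b) ^ n + b * s * (s / a) ^ n
        - b * t * (t / a) ^ n
        = (t * t ^ n - s * s ^ n) * (a * a ^ n - b * b ^ n) / (a ^ n * b ^ n) := by
      simp only [div_pow]
      field_simp
      ring
    rw [hterm]
    have h1 : s * s ^ n ≤ t * t ^ n :=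
      mul_le_mul hst (pow_le_pow_left₀ hs.le hst n) (pow_nonneg hs.le n) ht.le
    have h2 : b * b ^ n ≤ a * a ^ n :=
      mul_le_mul hba (pow_le_pow_left₀ hb.le hba n) (pow_nonneg hb.le n) ha.le
    exact mul_nonneg (hd n) (div_nonneg (mul_nonneg (by linarith) (by linarith))
      (mul_nonneg (pow_nonneg ha.le n) (pow_nonneg hb.le n)))
  have hsym : ∀ n m : ℕ,
      0 ≤ ((d n * (t / b) ^ n) * (d m * (s / a) ^ m) - (d n * (s / b) ^ n) * (d m * (t / a) ^ m))
        + ((d m * (t / b) ^ m) * (d n * (s / a) ^ n) - (d m * (s / b) ^ m) * (d n * (t / a) ^ n)) := by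
    intro n m
    have hkey := key_aux hs.le hst hb.le hba n m
    have heq : ((d n * (t / b) ^ n) * (d m * (s / a) ^ m) - (d n * (s / b) ^ n) * (d m * (t / a) ^ m))
        + ((d m * (t / b) ^ m) * (d n * (s / a) ^ n) - (d m * (s / b) ^ m) * (d n * (t / a) ^ n))
        = d n * d m * ((t ^ n * s ^ m - s ^ n * t ^ m) * (a ^ n * b ^ m - b ^ n * a ^ m))
            / (a ^ (n + m) * b ^ (n + m)) := by
      simp only [div_pow]
      field_simp
      ring
    rw [heq]
    exact div_nonneg (mul_nonneg (mul_nonneg (hd n) (hd m)) hkey)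
      (mul_nonneg (pow_nonneg ha.le _) (pow_nonneg hb.le _))
  have hQ : 0 ≤ Qs := by
    have hcomm : Qs = ∑ n ∈ F, ∑ m ∈ F,
        ((d m * (t / b) ^ m) * (d n * (s / a) ^ n) - (d m * (s / b) ^ m) * (d n * (t / a) ^ n)) := by
      rw [hQ_def]
      exact Finset.sum_comm
    have h2Q : Qs + Qs = ∑ n ∈ F, ∑ m ∈ F,
        (((d n * (t / b) ^ n) * (d m * (s / a) ^ m) - (d n * (s / b) ^ n) * (d m * (t / a) ^ m))
          + ((d m * (t / b) ^ m) * (d n * (s / a) ^ n) - (d m * (s / b) ^ m) * (d n * (t / a) ^ n))) := by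
      nth_rewrite 2 [hcomm]
      rw [hQ_def, ← Finset.sum_add_distrib]
      exact Finset.sum_congr rfl fun n _ => (Finset.sum_add_distrib).symm
    have : 0 ≤ Qs + Qs := by
      rw [h2Q]
      exact Finset.sum_nonneg fun n _ => Finset.sum_nonneg fun m _ => hsym n m
    linarith
  have h1 : A = a * t * X1 - a * s * X2 + b * s * X3 - b * t * X4 := by
    rw [hA_def, hX1, hX2, hX3, hX4, Finset.mul_sum, Finset.mul_sum, Finset.mul_sum,
      Finset.mul_sum, ← Finset.sum_sub_distrib, ← Finset.sum_add_distrib,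
      ← Finset.sum_sub_distrib]
    exact Finset.sum_congr rfl fun n _ => by ring
  have h2 : X1 * X3 - X2 * X4 = Qs := by
    rw [hX1, hX2, hX3, hX4, hQ_def, Finset.sum_mul_sum, Finset.sum_mul_sum,
      ← Finset.sum_sub_distrib]
    exact Finset.sum_congr rfl fun n _ => (Finset.sum_sub_distrib _ _).symm
  rw [← sub_nonneg]
  have hfinal : (b + t * X1) * (a + s * X3) - (b + s * X2) * (a + t * X4)
      = A + s * t * Qs := by
    linear_combination (-1 : ℝ) * h1 + (s * t) * h2
  rw [hfinal]
  exact add_nonneg hA (mul_nonneg (mul_nonneg hs.le ht.le) hQ)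

/-- The combined numerator claim `g_M^{-1}(θ_j) g_N^{-1}(θ_1) - g_N^{-1}(θ_j) g_M^{-1}(θ_1) ≤ 0`
(i.e. `F_{j,1} + s t F_{j,2} ≤ 0`) from the proof of Theorem 1:
with `R x = Σ_{n=1}^∞ C_n x^{n-1}` a power series with nonnegative coefficients,
absolutely convergent at `s/a`, `s/b`, `t/a`, `t/b` (where `0 < s < t`, `0 < b < a`),
`(b + t R(t/b)) (a + s R(s/a)) ≥ (b + s R(s/b)) (a + t R(t/a))`. -/
theorem outlier_numerator_ineq
    (C : ℕ → ℝ) (s t a b : ℝ)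
    (hC : ∀ n : ℕ, 1 ≤ n → 0 ≤ C n)
    (hs : 0 < s) (hst : s < t) (hb : 0 < b) (hba : b < a)
    (R : ℝ → ℝ) (hR : ∀ x : ℝ, R x = ∑' n : ℕ, C (n + 1) * x ^ n)
    (hsa : Summable fun n : ℕ => |C (n + 1) * (s / a) ^ n|)
    (hsb : Summable fun n : ℕ => |C (n + 1) * (s / b) ^ n|)
    (hta : Summable fun n : ℕ => |C (n + 1) * (t / a) ^ n|)
    (htb : Summable fun n : ℕ => |C (n + 1) * (t / b) ^ n|) :
    (b + s * R (s / b)) * (a + t * R (t / a)) ≤ (b + t * R (t / b)) * (a + s * R (s / a)) := by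
  have hd : ∀ n : ℕ, 0 ≤ C (n + 1) := fun n => hC (n + 1) (Nat.le_add_left 1 n)
  have Ssa : Summable fun n : ℕ => C (n + 1) * (s / a) ^ n := hsa.of_abs
  have Ssb : Summable fun n : ℕ => C (n + 1) * (s / b) ^ n := hsb.of_abs
  have Sta : Summable fun n : ℕ => C (n + 1) * (t / a) ^ n := hta.of_abs
  have Stb : Summable fun n : ℕ => C (n + 1) * (t / b) ^ n := htb.of_abs
  have Tsa := Ssa.hasSum.tendsto_sum_nat
  have Tsb := Ssb.hasSum.tendsto_sum_nat
  have Tta := Sta.hasSum.tendsto_sum_nat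
  have Ttb := Stb.hasSum.tendsto_sum_nat
  rw [hR, hR, hR, hR]
  have TL : Tendsto (fun N => (b + s * ∑ n ∈ Finset.range N, C (n + 1) * (s / b) ^ n) *
      (a + t * ∑ n ∈ Finset.range N, C (n + 1) * (t / a) ^ n)) atTop
      (nhds ((b + s * ∑' n : ℕ, C (n + 1) * (s / b) ^ n) *
        (a + t * ∑' n : ℕ, C (n + 1) * (t / a) ^ n))) :=
    ((tendsto_const_nhds.add (tendsto_const_nhds.mul Tsb)).mul
      (tendsto_const_nhds.add (tendsto_const_nhds.mul Tta)))
  have TR : Tendsto (fun N => (b + t * ∑ n ∈ Finset.range N, C (n + 1) * (t / b) ^ n) *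
      (a + s * ∑ n ∈ Finset.range N, C (n + 1) * (s / a) ^ n)) atTop
      (nhds ((b + t * ∑' n : ℕ, C (n + 1) * (t / b) ^ n) *
        (a + s * ∑' n : ℕ, C (n + 1) * (s / a) ^ n))) :=
    ((tendsto_const_nhds.add (tendsto_const_nhds.mul Ttb)).mul
      (tendsto_const_nhds.add (tendsto_const_nhds.mul Tsa)))
  exact le_of_tendsto_of_tendsto' TL TR
    (fun N => finite_ineq (fun n => C (n + 1)) hd hs hst.le hb hba.le N)
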